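/- With the notation C_{p,q} := ∑_{a,b=1}^N x_a^p y_b^q · Y(x_a)X(y_b) / ((x_a−y_b) X'(x_a) Y'(y_b)), one has C_{-2,1} = −1 + (∏_i y_i/x_i)·( 1 − (∑_i (1/x_i − 1/y_i))·(∑_i (x_i − y_i)) ). -/

import Mathlib

open Finset Polynomial

-- general degree fact
lemma nodal_sub_degree_lt {N : ℕ} (hN : N ≠ 0) (t f : Fin N → ℂ) :
    (Lagrange.nodal univ f - Lagrange.nodal univ t).degree < ((univ : Finset (Fin N)).card : WithBot ℕ) := by
  have h := Polynomial.degree_sub_lt (p := Lagrange.nodal (univ : Finset (Fin N)) f)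
    (q := Lagrange.nodal univ t)
    (by rw [Lagrange.degree_nodal, Lagrange.degree_nodal])
    Lagrange.nodal_ne_zero
    (by rw [Lagrange.nodal_monic.leadingCoeff, Lagrange.nodal_monic.leadingCoeff])
  rwa [Lagrange.degree_nodal] at h

-- partial-fraction evaluation lemma
lemma PF {N : ℕ} (hN : N ≠ 0) (t f : Fin N → ℂ) (ht : Function.Injective t)
    (z : ℂ) (hz : ∀ i, z ≠ t i) :
    ∑ a, (∏ i, (t a - f i)) / ((z - t a) * ∏ i ∈ univ.erase a, (t a - t i))
      = (∏ i, (z - f i)) / (∏ i, (z - t i)) - 1 := by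
  set g : Polynomial ℂ := Lagrange.nodal univ f - Lagrange.nodal univ t with hg
  have hdeg := nodal_sub_degree_lt hN t f
  have hginterp := Lagrange.eq_interpolate (f := g) ht.injOn hdeg
  have heval := Lagrange.eval_interpolate_not_at_node (s := (univ : Finset (Fin N))) (v := t)
    (fun i => g.eval (t i)) (x := z) (fun i _ => hz i)
  rw [← hginterp] at heval
  have hA : (∏ i, (z - t i)) ≠ 0 :=
    prod_ne_zero_iff.mpr fun i _ => sub_ne_zero_of_ne (hz i)
  have hgz : g.eval z = (∏ i, (z - f i)) - (∏ i, (z - t i)) := by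
    simp [hg, Lagrange.eval_nodal]
  have hgt : ∀ a : Fin N, g.eval (t a) = ∏ i, (t a - f i) := by
    intro a
    have h0 : ∏ i, (t a - t i) = 0 := Finset.prod_eq_zero (mem_univ a) (by simp)
    simp [hg, Lagrange.eval_nodal, h0]
  have hterm : ∀ a : Fin N,
      (∏ i, (t a - f i)) / ((z - t a) * ∏ i ∈ univ.erase a, (t a - t i))
        = Lagrange.nodalWeight univ t a * (z - t a)⁻¹ * g.eval (t a) := by
    intro a
    rw [hgt a, Lagrange.nodalWeight, prod_inv_distrib, div_eq_mul_inv, mul_inv]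
    ring
  calc ∑ a, (∏ i, (t a - f i)) / ((z - t a) * ∏ i ∈ univ.erase a, (t a - t i))
      = ∑ a, Lagrange.nodalWeight univ t a * (z - t a)⁻¹ * g.eval (t a) :=
        Finset.sum_congr rfl fun a _ => hterm a
    _ = (∏ i, (z - f i)) / (∏ i, (z - t i)) - 1 := by
        rw [Lagrange.eval_nodal, hgz] at heval
        rw [div_sub_one hA, eq_div_iff hA]
        beta_reduce at heval
        linear_combination -heval

-- coefficient form
lemma PFC {N : ℕ} (hN : N ≠ 0) (t f : Fin N → ℂ) (ht : Function.Injective t) :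
    ∑ a, (∏ i, (t a - f i)) / (∏ i ∈ univ.erase a, (t a - t i))
      = ∑ i, (t i - f i) := by
  set g : Polynomial ℂ := Lagrange.nodal univ f - Lagrange.nodal univ t with hg
  have hdeg := nodal_sub_degree_lt hN t f
  have hginterp := Lagrange.eq_interpolate (f := g) ht.injOn hdeg
  have hcard : (univ : Finset (Fin N)).card = N := by simp
  have hgt : ∀ a : Fin N, g.eval (t a) = ∏ i, (t a - f i) := by
    intro a
    have h0 : ∏ i, (t a - t i) = 0 := Finset.prod_eq_zero (mem_univ a) (by simp)
    simp [hg, Lagrange.eval_nodal, h0]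
  -- coeff (N-1) of g
  have hcg : g.coeff (N - 1) = ∑ i, (t i - f i) := by
    have h1 : (Lagrange.nodal (univ : Finset (Fin N)) f).coeff (N - 1) = -∑ i, f i := by
      have := prod_X_sub_C_coeff_card_pred (univ : Finset (Fin N)) f
        (by simp [Nat.pos_of_ne_zero hN])
      rwa [hcard] at this
    have h2 : (Lagrange.nodal (univ : Finset (Fin N)) t).coeff (N - 1) = -∑ i, t i := by
      have := prod_X_sub_C_coeff_card_pred (univ : Finset (Fin N)) t
        (by simp [Nat.pos_of_ne_zero hN])
      rwa [hcard] at this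
    rw [hg]
    rw [Polynomial.coeff_sub]
    unfold Lagrange.nodal at h1 h2 ⊢
    rw [h1, h2, Finset.sum_sub_distrib]
    ring
  -- coeff (N-1) of the interpolation
  have hci : (Lagrange.interpolate univ t fun i => g.eval (t i)).coeff (N - 1)
      = ∑ a, (∏ i, (t a - f i)) / (∏ i ∈ univ.erase a, (t a - t i)) := by
    rw [Lagrange.interpolate_apply, Polynomial.finset_sum_coeff]
    refine Finset.sum_congr rfl fun a _ => ?_
    rw [Lagrange.basis_eq_prod_sub_inv_mul_nodal_div (mem_univ a),
      ← Lagrange.nodal_erase_eq_nodal_div (mem_univ a), ← mul_assoc, ← Polynomial.C_mul,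
      Polynomial.coeff_C_mul]
    have hmonic : (Lagrange.nodal ((univ : Finset (Fin N)).erase a) t).Monic :=
      Lagrange.nodal_monic
    have hdeg' : (Lagrange.nodal ((univ : Finset (Fin N)).erase a) t).natDegree = N - 1 := by
      rw [Lagrange.natDegree_nodal, card_erase_of_mem (mem_univ a), hcard]
    rw [← hdeg', hmonic.coeff_natDegree, mul_one, hgt a, Lagrange.nodalWeight,
      prod_inv_distrib, ← div_eq_mul_inv]
  rw [← hci, ← hginterp, hcg]


/-- `C_{p,q} = ∑_{a,b} x_a^p y_b^q · Y(x_a) X(y_b) / ((x_a−y_b) X'(x_a) Y'(y_b))`. -/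
noncomputable def Cpq {N : ℕ} (x y : Fin N → ℂ) (p q : ℤ) : ℂ :=
  ∑ a, ∑ b, x a ^ p * y b ^ q *
    (∏ i, (x a - y i)) * (∏ i, (y b - x i)) /
    ((x a - y b) * (∏ i ∈ Finset.univ.erase a, (x a - x i)) *
      (∏ i ∈ Finset.univ.erase b, (y b - y i)))

set_option maxHeartbeats 1000000 in
theorem stmt6 (N : ℕ) (x y : Fin N → ℂ)
    (hxinj : Function.Injective x) (hyinj : Function.Injective y)
    (hx : ∀ i, x i ≠ 0) (hy : ∀ j, y j ≠ 0)
    (hxy : ∀ i j, x i ≠ y j) :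
    Cpq x y (-2) 1 = -1 + (∏ i, y i / x i) *
      (1 - (∑ i, (1 / x i - 1 / y i)) * ∑ i, (x i - y i)) := by
  rcases Nat.eq_zero_or_pos N with hN0 | hNpos
  · subst hN0
    simp [Cpq]
  obtain ⟨n, rfl⟩ : ∃ n, N = n + 1 := ⟨N - 1, (Nat.succ_pred_eq_of_pos hNpos).symm⟩
  have hN : n + 1 ≠ 0 := Nat.succ_ne_zero n
  -- nonvanishing facts
  have hX' : ∀ a : Fin (n+1), (∏ i ∈ univ.erase a, (x a - x i)) ≠ 0 := by
    intro a
    refine prod_ne_zero_iff.mpr fun i hi => sub_ne_zero_of_ne fun h => ?_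
    exact (mem_erase.mp hi).1 (hxinj h).symm
  have hY' : ∀ b : Fin (n+1), (∏ i ∈ univ.erase b, (y b - y i)) ≠ 0 := by
    intro b
    refine prod_ne_zero_iff.mpr fun i hi => sub_ne_zero_of_ne fun h => ?_
    exact (mem_erase.mp hi).1 (hyinj h).symm
  have hxab : ∀ a b, x a - y b ≠ 0 := fun a b => sub_ne_zero_of_ne (hxy a b)
  have hPx : (∏ i, x i) ≠ 0 := prod_ne_zero_iff.mpr fun i _ => hx i
  have hPy : (∏ i, y i) ≠ 0 := prod_ne_zero_iff.mpr fun i _ => hy i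
  -- F1
  have F1 : ∀ a : Fin (n+1), ∑ b, (∏ i, (y b - x i)) /
      ((x a - y b) * ∏ i ∈ univ.erase b, (y b - y i)) = -1 := by
    intro a
    have h := PF hN y x hyinj (x a) (fun i => hxy a i)
    have h0 : ∏ i, (x a - x i) = 0 := Finset.prod_eq_zero (mem_univ a) (by simp)
    rw [h0, zero_div, zero_sub] at h
    exact h
  -- F2
  have F2 : ∑ b, (∏ i, (y b - x i)) / (∏ i ∈ univ.erase b, (y b - y i))
      = ∑ i, (y i - x i) := PFC hN y x hyinj
  -- F3
  have F3 : ∑ a, (∏ i, (x a - y i)) / ((0 - x a) * ∏ i ∈ univ.erase a, (x a - x i))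
      = (∏ i, y i) / (∏ i, x i) - 1 := by
    have h := PF hN x y hxinj 0 (fun i => (hx i).symm)
    have h1 : ∏ i, ((0:ℂ) - y i) = (-1) ^ (n+1) * ∏ i, y i := by
      rw [show (fun i => (0:ℂ) - y i) = fun i => (-1) * y i from funext fun i => by ring,
        prod_mul_distrib, prod_const, card_univ, Fintype.card_fin]
    have h2 : ∏ i, ((0:ℂ) - x i) = (-1) ^ (n+1) * ∏ i, x i := by
      rw [show (fun i => (0:ℂ) - x i) = fun i => (-1) * x i from funext fun i => by ring,
        prod_mul_distrib, prod_const, card_univ, Fintype.card_fin]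
    rw [h1, h2, mul_div_mul_left _ _ (pow_ne_zero (n+1) (by norm_num : (-1:ℂ) ≠ 0))] at h
    exact h
  -- F4
  have hxinv : Function.Injective (fun i => (x i)⁻¹) := fun i j h =>
    hxinj (inv_inj.mp h)
  have claim : ∀ a : Fin (n+1), (∏ i, ((x a)⁻¹ - (y i)⁻¹)) /
      (∏ i ∈ univ.erase a, ((x a)⁻¹ - (x i)⁻¹))
      = -((∏ i, x i) / (∏ i, y i)) *
        ((∏ i, (x a - y i)) / (x a ^ 2 * ∏ i ∈ univ.erase a, (x a - x i))) := by
    intro a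
    have h1 : ∏ i, ((x a)⁻¹ - (y i)⁻¹)
        = (∏ i, (y i - x a)) / (x a ^ (n+1) * ∏ i, y i) := by
      calc ∏ i, ((x a)⁻¹ - (y i)⁻¹) = ∏ i, ((y i - x a) / (x a * y i)) :=
            prod_congr rfl fun i _ => inv_sub_inv (hx a) (hy i)
        _ = (∏ i, (y i - x a)) / (∏ i, (x a * y i)) := prod_div_distrib _ _
        _ = (∏ i, (y i - x a)) / (x a ^ (n+1) * ∏ i, y i) := by
            rw [prod_mul_distrib, prod_const, card_univ, Fintype.card_fin]
    have hcerase : ((univ : Finset (Fin (n+1))).erase a).card = n := by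
      rw [card_erase_of_mem (mem_univ a), card_univ, Fintype.card_fin]
      omega
    have h2 : ∏ i ∈ univ.erase a, ((x a)⁻¹ - (x i)⁻¹)
        = (∏ i ∈ univ.erase a, (x i - x a)) / (x a ^ n * ∏ i ∈ univ.erase a, x i) := by
      calc ∏ i ∈ univ.erase a, ((x a)⁻¹ - (x i)⁻¹)
          = ∏ i ∈ univ.erase a, ((x i - x a) / (x a * x i)) :=
            prod_congr rfl fun i _ => inv_sub_inv (hx a) (hx i)
        _ = (∏ i ∈ univ.erase a, (x i - x a)) / (∏ i ∈ univ.erase a, (x a * x i)) :=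
            prod_div_distrib _ _
        _ = _ := by rw [prod_mul_distrib, prod_const, hcerase]
    have h3 : ∏ i, (y i - x a) = (-1) ^ (n+1) * ∏ i, (x a - y i) := by
      rw [show (fun i => y i - x a) = fun i => (-1) * (x a - y i) from funext fun i => by ring,
        prod_mul_distrib, prod_const, card_univ, Fintype.card_fin]
    have h4 : ∏ i ∈ univ.erase a, (x i - x a)
        = (-1) ^ n * ∏ i ∈ univ.erase a, (x a - x i) := by
      rw [show (fun i => x i - x a) = fun i => (-1) * (x a - x i) from funext fun i => by ring,
        prod_mul_distrib, prod_const, hcerase]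
    have h5 : ∏ i ∈ univ.erase a, x i = (∏ i, x i) / x a := by
      rw [eq_div_iff (hx a)]
      exact Finset.prod_erase_mul _ _ (mem_univ a)
    have hex : (∏ i ∈ univ.erase a, (x a - x i)) ≠ 0 := hX' a
    have hm1 : ((-1 : ℂ) ^ n) ≠ 0 := pow_ne_zero n (by norm_num)
    have hxan : x a ^ n ≠ 0 := pow_ne_zero n (hx a)
    rw [h1, h2, h3, h4, h5]
    simp only [pow_succ]
    generalize x a ^ n = c at hxan ⊢
    generalize (-1 : ℂ) ^ n = m at hm1 ⊢
    field_simp [hm1, hxan, hx a, hPx, hPy, hex]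
  have F4 : ∑ a, (∏ i, (x a - y i)) / (x a ^ 2 * ∏ i ∈ univ.erase a, (x a - x i))
      = -(((∏ i, y i) / (∏ i, x i)) * ∑ i, ((x i)⁻¹ - (y i)⁻¹)) := by
    have h := PFC hN (fun i => (x i)⁻¹) (fun i => (y i)⁻¹) hxinv
    simp only [claim] at h
    rw [← mul_sum] at h
    have hQ : (-((∏ i, x i) / (∏ i, y i))) ≠ 0 := neg_ne_zero.mpr (div_ne_zero hPx hPy)
    refine mul_left_cancel₀ hQ ?_
    rw [h]
    have hone : ((∏ i, x i) / (∏ i, y i)) * ((∏ i, y i) / (∏ i, x i)) = 1 := by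
      rw [div_mul_div_comm, mul_comm ((∏ i, y i)) ((∏ i, x i))]
      exact div_self (mul_ne_zero hPx hPy)
    rw [neg_mul_neg, ← mul_assoc, hone, one_mul]
  -- inner sum
  have inner : ∀ a : Fin (n+1), ∑ b, y b * ((∏ i, (y b - x i)) /
      ((x a - y b) * ∏ i ∈ univ.erase b, (y b - y i)))
      = -x a - ∑ i, (y i - x i) := by
    intro a
    calc ∑ b, y b * ((∏ i, (y b - x i)) / ((x a - y b) * ∏ i ∈ univ.erase b, (y b - y i)))
        = ∑ b, (x a * ((∏ i, (y b - x i)) / ((x a - y b) * ∏ i ∈ univ.erase b, (y b - y i)))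
            - (∏ i, (y b - x i)) / (∏ i ∈ univ.erase b, (y b - y i))) := by
          refine sum_congr rfl fun b _ => ?_
          field_simp [hxab a b, hY' b]
          ring
      _ = x a * ∑ b, (∏ i, (y b - x i)) / ((x a - y b) * ∏ i ∈ univ.erase b, (y b - y i))
            - ∑ b, (∏ i, (y b - x i)) / (∏ i ∈ univ.erase b, (y b - y i)) := by
          rw [Finset.sum_sub_distrib, mul_sum]
      _ = -x a - ∑ i, (y i - x i) := by rw [F1 a, F2]; ring
  -- final assembly
  calc Cpq x y (-2) 1
      = ∑ a, ((∏ i, (x a - y i)) / (x a ^ 2 * ∏ i ∈ univ.erase a, (x a - x i)) *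
          ∑ b, y b * ((∏ i, (y b - x i)) /
            ((x a - y b) * ∏ i ∈ univ.erase b, (y b - y i)))) := by
        unfold Cpq
        refine sum_congr rfl fun a _ => ?_
        rw [mul_sum]
        refine sum_congr rfl fun b _ => ?_
        have hzp : x a ^ (-2 : ℤ) = (x a ^ 2)⁻¹ := by
          rw [show (-2 : ℤ) = -(2:ℕ) by norm_num, zpow_neg, zpow_natCast]
        rw [hzp, zpow_one]
        field_simp [hx a, hxab a b, hX' a, hY' b]
    _ = ∑ a, ((∏ i, (x a - y i)) / (x a ^ 2 * ∏ i ∈ univ.erase a, (x a - x i)) *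
          (-x a - ∑ i, (y i - x i))) := by
        refine sum_congr rfl fun a _ => ?_
        rw [inner a]
    _ = ∑ a, ((∏ i, (x a - y i)) / ((0 - x a) * ∏ i ∈ univ.erase a, (x a - x i))
          - (∑ i, (y i - x i)) *
            ((∏ i, (x a - y i)) / (x a ^ 2 * ∏ i ∈ univ.erase a, (x a - x i)))) := by
        refine sum_congr rfl fun a _ => ?_
        field_simp [hx a, hX' a]
        ring
    _ = ((∏ i, y i) / (∏ i, x i) - 1) - (∑ i, (y i - x i)) *
          (-(((∏ i, y i) / (∏ i, x i)) * ∑ i, ((x i)⁻¹ - (y i)⁻¹))) := by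
        rw [Finset.sum_sub_distrib, ← mul_sum, F3, F4]
    _ = -1 + (∏ i, y i / x i) *
        (1 - (∑ i, (1 / x i - 1 / y i)) * ∑ i, (x i - y i)) := by
        rw [prod_div_distrib]
        have hs1 : ∑ i, ((1:ℂ) / x i - 1 / y i) = ∑ i, ((x i)⁻¹ - (y i)⁻¹) := by
          simp [one_div]
        have hs2 : ∑ i, (x i - y i) = -∑ i, (y i - x i) := by
          rw [← Finset.sum_neg_distrib]
          exact sum_congr rfl fun i _ => by ring
        rw [hs1, hs2]
        ring
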